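/- The function M is twice differentiable at 0 and (1/μ²)·M″(0) equals: 2(Bρ⁵ + (4B+1)ρ⁴ + (7B+5)ρ³ + (7B+12)ρ² + (4B+10)ρ + B + 3) / (μ²ρ²(1+ρ)²(1 + B + Bρ)) if ρ = β, and (2β^{B+3}(1+ρ)³(1+ρ+ρ²) − 2ρ^{B+3}((β³+β²+β)(ρ²+3ρ+2) + β³ + β² + (1+ρ)²)) / (μ²(1+ρ)²(β^{B+3}ρ²(1+ρ) − ρ^{B+3}β²(1+β))) if ρ ≠ β. -/

import Mathlib

set_option maxHeartbeats 2000000 in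
/-- Second moment of AoI for LCFS-PS (EH only when system is empty), from the MGF. -/
theorem stmt_11 (rho beta mu : ℝ) (hrho : 0 < rho) (hbeta : 0 < beta) (hmu : 0 < mu)
    (B : ℕ) (hB : 1 ≤ B)
    (theta pi1 : ℝ)
    (htheta : theta = if rho = beta then (B : ℝ)
      else beta * (beta ^ B - rho ^ B) / (rho ^ B * (beta - rho)))
    (hpi1 : pi1 = if rho = beta then 1 / (1 + (B : ℝ) * (1 + rho))
      else rho ^ B * (beta - rho) /
        (rho ^ B * (beta - rho) + beta * (1 + rho) * (beta ^ B - rho ^ B)))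
    (M : ℝ → ℝ)
    (hM : ∀ x, M x = rho * (1 + rho) * pi1 * (x ^ 2 * theta - x * theta * (1 + rho + beta)
        + beta * (1 + theta + theta * rho))
      / ((1 - x) * (rho - x) * (1 + rho - x) * (beta - x))) :
    DifferentiableAt ℝ M 0 ∧ DifferentiableAt ℝ (deriv M) 0 ∧
    (1 / mu ^ 2) * deriv (deriv M) 0 =
      if rho = beta then
        2 * ((B : ℝ) * rho ^ 5 + (4 * (B : ℝ) + 1) * rho ^ 4 + (7 * (B : ℝ) + 5) * rho ^ 3
            + (7 * (B : ℝ) + 12) * rho ^ 2 + (4 * (B : ℝ) + 10) * rho + (B : ℝ) + 3)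
          / (mu ^ 2 * rho ^ 2 * (1 + rho) ^ 2 * (1 + (B : ℝ) + (B : ℝ) * rho))
      else
        (2 * beta ^ (B + 3) * (1 + rho) ^ 3 * (1 + rho + rho ^ 2)
            - 2 * rho ^ (B + 3) * ((beta ^ 3 + beta ^ 2 + beta) * (rho ^ 2 + 3 * rho + 2)
              + beta ^ 3 + beta ^ 2 + (1 + rho) ^ 2))
          / (mu ^ 2 * (1 + rho) ^ 2 * (beta ^ (B + 3) * rho ^ 2 * (1 + rho)
            - rho ^ (B + 3) * beta ^ 2 * (1 + beta))) := by
  have h1r : (0:ℝ) < 1 + rho := by linarith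
  set c : ℝ := rho * (1 + rho) * pi1 with hc_def
  set p : ℝ → ℝ := fun x => x ^ 2 * theta - x * theta * (1 + rho + beta)
      + beta * (1 + theta + theta * rho) with hp_def
  set q : ℝ → ℝ := fun x => (1 - x) * (rho - x) * (1 + rho - x) * (beta - x) with hq_def
  set p' : ℝ → ℝ := fun x => 2 * x * theta - theta * (1 + rho + beta) with hp'_def
  set q' : ℝ → ℝ := fun x =>
      -((rho - x) * (1 + rho - x) * (beta - x)) - (1 - x) * (1 + rho - x) * (beta - x)
      - (1 - x) * (rho - x) * (beta - x) - (1 - x) * (rho - x) * (1 + rho - x) with hq'_def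
  set D : ℝ → ℝ := fun x => (c * p' x * q x - c * p x * q' x) / q x ^ 2 with hD_def
  have hMeq : M = fun x => c * p x / q x := by funext x; rw [hM]
  have hpd : ∀ x, HasDerivAt p (p' x) x := by
    intro x
    have h := (((hasDerivAt_pow 2 x).mul_const theta).sub
      (((hasDerivAt_id x).mul_const theta).mul_const (1 + rho + beta))).add_const
      (beta * (1 + theta + theta * rho))
    convert h using 1
    rotate_right
    first
    | (simp [hp'_def]; ring)
    | simp [hp'_def]
    all_goals rfl
  have hqd : ∀ x, HasDerivAt q (q' x) x := by
    intro x
    have h := ((((hasDerivAt_id x).const_sub 1).mul ((hasDerivAt_id x).const_sub rho)).mul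
      ((hasDerivAt_id x).const_sub (1 + rho))).mul ((hasDerivAt_id x).const_sub beta)
    convert h using 1
    rotate_right
    first
    | (simp [hq'_def]; ring)
    | simp [hq'_def]
    all_goals rfl
  have hq0pos : 0 < q 0 := by
    have : q 0 = rho * (1 + rho) * beta := by simp [hq_def]
    rw [this]; positivity
  have hq0 : q 0 ≠ 0 := ne_of_gt hq0pos
  have hMder : ∀ x, q x ≠ 0 → HasDerivAt M (D x) x := by
    intro x hx
    rw [hMeq]
    exact ((hpd x).const_mul c).div (hqd x) hx
  have hev : ∀ᶠ x in nhds (0:ℝ), q x ≠ 0 := (hqd 0).continuousAt.eventually_ne hq0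
  have hderivM : deriv M =ᶠ[nhds (0:ℝ)] D := hev.mono fun x hx => (hMder x hx).deriv
  have hp'd : HasDerivAt p' (2 * theta) 0 := by
    have h := (((hasDerivAt_id (0:ℝ)).const_mul 2).mul_const theta).sub_const
      (theta * (1 + rho + beta))
    convert h using 1
    rotate_right
    ring
    all_goals rfl
  have hq'd : HasDerivAt q' (2 * ((1 + rho - 0) * (beta - 0) + (rho - 0) * (beta - 0)
      + (rho - 0) * (1 + rho - 0) + (1 - 0) * (beta - 0) + (1 - 0) * (1 + rho - 0)
      + (1 - 0) * (rho - 0))) 0 := by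
    have h2 := (hasDerivAt_id (0:ℝ)).const_sub rho
    have h3 := (hasDerivAt_id (0:ℝ)).const_sub (1 + rho)
    have h4 := (hasDerivAt_id (0:ℝ)).const_sub beta
    have h1 := (hasDerivAt_id (0:ℝ)).const_sub 1
    have h := ((((h2.mul h3).mul h4).neg.sub ((h1.mul h3).mul h4)).sub
      ((h1.mul h2).mul h4)).sub ((h1.mul h2).mul h3)
    convert h using 1
    rotate_right
    first
    | (simp; ring)
    | simp
    all_goals rfl
  have hN : HasDerivAt (fun x => c * p' x * q x - c * p x * q' x)
      (c * (2 * theta) * q 0 + c * p' 0 * q' 0 - (c * p' 0 * q' 0 + c * p 0 *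
        (2 * ((1 + rho - 0) * (beta - 0) + (rho - 0) * (beta - 0)
        + (rho - 0) * (1 + rho - 0) + (1 - 0) * (beta - 0) + (1 - 0) * (1 + rho - 0)
        + (1 - 0) * (rho - 0))))) 0 := by
    exact ((hp'd.const_mul c).mul (hqd 0)).sub (((hpd 0).const_mul c).mul hq'd)
  have hden : HasDerivAt (fun x => q x ^ 2) ((2:ℕ) * q 0 ^ (2 - 1) * q' 0) 0 := (hqd 0).pow 2
  have hDd : HasDerivAt D _ 0 := hN.div hden (pow_ne_zero 2 hq0)
  refine ⟨hMeq ▸ (((hpd 0).const_mul c).div (hqd 0) hq0).differentiableAt, ?_, ?_⟩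
  · exact (hderivM.differentiableAt_iff).mpr hDd.differentiableAt
  · rw [hderivM.deriv_eq, hDd.deriv]
    simp only [hc_def, hp_def, hq_def, hp'_def, hq'_def]
    norm_num
    by_cases hrb : rho = beta
    · subst hrb
      rw [if_pos rfl] at htheta hpi1 ⊢
      subst htheta hpi1
      have hBpos : (0:ℝ) < (B:ℝ) := by exact_mod_cast Nat.lt_of_lt_of_le Nat.zero_lt_one hB
      have h1 : (0:ℝ) < 1 + (B:ℝ) * (1 + rho) := by positivity
      have h2 : (0:ℝ) < 1 + (B:ℝ) + (B:ℝ) * rho := by positivity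
      field_simp
      ring
    · rw [if_neg hrb] at htheta hpi1 ⊢
      subst htheta hpi1
      have hbr : beta - rho ≠ 0 := sub_ne_zero.mpr (Ne.symm hrb)
      have hrB : (0:ℝ) < rho ^ B := by positivity
      have hbB : (0:ℝ) < beta ^ B := by positivity
      have hBne : B ≠ 0 := by omega
      have hS : rho ^ B * (beta - rho) + beta * (1 + rho) * (beta ^ B - rho ^ B) ≠ 0 := by
        rcases lt_or_gt_of_ne (Ne.symm hrb) with h | h
        · have hp1 : beta ^ B < rho ^ B := pow_lt_pow_left₀ h hbeta.le hBne
          have : rho ^ B * (beta - rho) + beta * (1 + rho) * (beta ^ B - rho ^ B) < 0 := by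
            nlinarith [mul_pos hbeta h1r]
          exact ne_of_lt this
        · have hp1 : rho ^ B < beta ^ B := pow_lt_pow_left₀ h hrho.le hBne
          have : 0 < rho ^ B * (beta - rho) + beta * (1 + rho) * (beta ^ B - rho ^ B) := by
            nlinarith [mul_pos hbeta h1r]
          exact ne_of_gt this
      have e1 : beta ^ (B + 3) = beta ^ B * beta ^ 3 := pow_add beta B 3
      have e2 : rho ^ (B + 3) = rho ^ B * rho ^ 3 := pow_add rho B 3
      rw [e1, e2]
      have hfac : beta ^ B * beta ^ 3 * rho ^ 2 * (1 + rho)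
          - rho ^ B * rho ^ 3 * beta ^ 2 * (1 + beta)
          = (beta ^ B * beta - rho ^ B * rho) * (rho ^ 2 * beta ^ 2)
            + (beta ^ B - rho ^ B) * (rho ^ 3 * beta ^ 3) := by ring
      have hT : beta ^ B * beta ^ 3 * rho ^ 2 * (1 + rho)
          - rho ^ B * rho ^ 3 * beta ^ 2 * (1 + beta) ≠ 0 := by
        rcases lt_or_gt_of_ne (Ne.symm hrb) with h | h
        · have hp1 : beta ^ B < rho ^ B := pow_lt_pow_left₀ h hbeta.le hBne
          have key : beta ^ B * beta - rho ^ B * rho < 0 := by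
            nlinarith [pow_pos hbeta B, pow_pos hrho B]
          refine ne_of_lt ?_
          rw [hfac]
          have h1 : (beta ^ B * beta - rho ^ B * rho) * (rho ^ 2 * beta ^ 2) < 0 :=
            mul_neg_of_neg_of_pos key (by positivity)
          have h2 : (beta ^ B - rho ^ B) * (rho ^ 3 * beta ^ 3) < 0 :=
            mul_neg_of_neg_of_pos (by linarith) (by positivity)
          linarith
        · have hp1 : rho ^ B < beta ^ B := pow_lt_pow_left₀ h hrho.le hBne
          have key : 0 < beta ^ B * beta - rho ^ B * rho := by
            nlinarith [pow_pos hbeta B, pow_pos hrho B]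
          refine ne_of_gt ?_
          rw [hfac]
          have h1 : 0 < (beta ^ B * beta - rho ^ B * rho) * (rho ^ 2 * beta ^ 2) :=
            mul_pos key (by positivity)
          have h2 : 0 < (beta ^ B - rho ^ B) * (rho ^ 3 * beta ^ 3) :=
            mul_pos (by linarith) (by positivity)
          linarith
      clear hN hDd hMder hderivM hM hMeq hev hqd hpd hq'd hp'd hden hq0pos hq0 hfac e1 e2
      generalize hA : rho ^ B = a at hrB hS hT ⊢
      generalize hBb : beta ^ B = b at hbB hS hT ⊢
      have ha : a ≠ 0 := ne_of_gt hrB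
      field_simp
      ring
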